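/- Let 0 < r ≤ 1/2. Define E^d(r) = diag(1,1,−r²) ∈ S³, the 3×3 rotation-type matrix R(θ) with rows (cos θ, sin θ, 0), (−sin θ, cos θ, 0), (0,0,1), and the translation matrix P with rows (1,0,−1), (0,1,0), (0,0,1). Set B^k = R(kπ/3)ᵀ Pᵀ E^d(r) P R(kπ/3) for 0 ≤ k ≤ 5, B^6 = E^d(r), and B^7 = −diag(1,1,−9/4). With weights α_k = 1 for 0 ≤ k ≤ 6 and α_7 = 1/3, the matrix α_j B^j + α_k B^k is positive semidefinite for all 0 ≤ j < k ≤ 7; in particular the family {B^0, …, B^7} satisfies Condition (D). -/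

import Mathlib

open Matrix

/-- The disk-constraint matrix `E^d(r) = diag(1, 1, -r²)`. -/
noncomputable def EdMat (r : ℝ) : Matrix (Fin 3) (Fin 3) ℝ :=
  !![1, 0, 0; 0, 1, 0; 0, 0, -r ^ 2]

/-- The rotation-type matrix `R(θ)`. -/
noncomputable def RMat (θ : ℝ) : Matrix (Fin 3) (Fin 3) ℝ :=
  !![Real.cos θ, Real.sin θ, 0; -Real.sin θ, Real.cos θ, 0; 0, 0, 1]

/-- The translation matrix `P = P((1,0))`. -/
noncomputable def PMat : Matrix (Fin 3) (Fin 3) ℝ :=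
  !![1, 0, -1; 0, 1, 0; 0, 0, 1]

/-- The family `B^0, …, B^7` of Instance 2.1. -/
noncomputable def diskFam (r : ℝ) (k : Fin 8) : Matrix (Fin 3) (Fin 3) ℝ :=
  if (k : ℕ) ≤ 5 then
    (RMat ((k : ℕ) * Real.pi / 3))ᵀ * PMatᵀ * EdMat r * PMat * RMat ((k : ℕ) * Real.pi / 3)
  else if (k : ℕ) = 6 then EdMat r
  else -(!![1, 0, 0; 0, 1, 0; 0, 0, -(9 / 4)] : Matrix (Fin 3) (Fin 3) ℝ)

/-- The weights `α_k = 1` for `k ≤ 6` and `α_7 = 1/3`. -/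
noncomputable def diskWeight (k : Fin 8) : ℝ := if (k : ℕ) = 7 then 1 / 3 else 1

/-- The key positive-semidefiniteness criterion for arrow-shaped matrices. -/
lemma psd_aux (a b c d : ℝ) (ha : 0 < a) (h : b^2 + c^2 ≤ a*d) :
    (!![a,0,b;0,a,c;b,c,d]).PosSemidef := by
  rw [Matrix.posSemidef_iff_dotProduct_mulVec]
  constructor
  · unfold Matrix.IsHermitian
    ext i j
    fin_cases i <;> fin_cases j <;> simp [Matrix.conjTranspose_apply]
  · intro x
    simp [dotProduct, mulVec, Fin.sum_univ_three]
    nlinarith [sq_nonneg (a * x 0 + b * x 2), sq_nonneg (a * x 1 + c * x 2), sq_nonneg (x 2),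
      mul_pos ha ha]

lemma psd_of_eq {M : Matrix (Fin 3) (Fin 3) ℝ} (a b c d : ℝ)
    (hM : M = !![a,0,b;0,a,c;b,c,d]) (ha : 0 < a) (h : b^2 + c^2 ≤ a*d) :
    M.PosSemidef := hM ▸ psd_aux a b c d ha h

/-- The `B` matrix for angle with cosine `c`, sine `s`. -/
noncomputable def Bm (c s r : ℝ) : Matrix (Fin 3) (Fin 3) ℝ :=
  !![1, 0, -c; 0, 1, -s; -c, -s, 1 - r^2]

lemma bigProd (θ r : ℝ) :
    (RMat θ)ᵀ * PMatᵀ * EdMat r * PMat * RMat θ = Bm (Real.cos θ) (Real.sin θ) r := by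
  have hRT : (RMat θ)ᵀ =
      !![Real.cos θ, -Real.sin θ, 0; Real.sin θ, Real.cos θ, 0; 0, 0, 1] := by
    ext i j; fin_cases i <;> fin_cases j <;> rfl
  have hPT : PMatᵀ = !![1, 0, 0; 0, 1, 0; -1, 0, 1] := by
    ext i j; fin_cases i <;> fin_cases j <;> rfl
  rw [hRT, hPT, RMat, PMat, EdMat, Matrix.mul_fin_three, Matrix.mul_fin_three,
    Matrix.mul_fin_three, Matrix.mul_fin_three, Bm]
  ext i j
  fin_cases i <;> fin_cases j <;> simp <;> nlinarith [Real.sin_sq_add_cos_sq θ]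

lemma famEq5 (r : ℝ) (k : Fin 8) (hk : (k : ℕ) ≤ 5) :
    diskFam r k = Bm (Real.cos ((k : ℕ) * Real.pi / 3)) (Real.sin ((k : ℕ) * Real.pi / 3)) r := by
  rw [diskFam, if_pos hk, bigProd]

lemma famEq6 (r : ℝ) (k : Fin 8) (hk : (k : ℕ) = 6) : diskFam r k = EdMat r := by
  rw [diskFam, if_neg (by omega), if_pos hk]

lemma famEq7 (r : ℝ) (k : Fin 8) (hk : (k : ℕ) = 7) :
    diskFam r k = -(!![1, 0, 0; 0, 1, 0; 0, 0, -(9 / 4)] : Matrix (Fin 3) (Fin 3) ℝ) := by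
  rw [diskFam, if_neg (by omega), if_neg (by omega)]

lemma wlt (k : Fin 8) (h : (k : ℕ) ≠ 7) : diskWeight k = 1 := if_neg h
lemma w7 (k : Fin 8) (h : (k : ℕ) = 7) : diskWeight k = 1/3 := if_pos h

lemma cos_d_le (d : ℕ) (h1 : 1 ≤ d) (h5 : d ≤ 5) : Real.cos (d * Real.pi / 3) ≤ 1/2 := by
  have hpi3 := Real.cos_pi_div_three
  interval_cases d
  · push_cast
    rw [show (1:ℝ) * Real.pi / 3 = Real.pi/3 by ring, hpi3]
  · push_cast
    rw [show (2:ℝ) * Real.pi / 3 = Real.pi - Real.pi/3 by ring, Real.cos_pi_sub, hpi3]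
    norm_num
  · push_cast
    rw [show (3:ℝ) * Real.pi / 3 = Real.pi by ring, Real.cos_pi]; norm_num
  · push_cast
    rw [show (4:ℝ) * Real.pi / 3 = Real.pi + Real.pi/3 by ring, Real.cos_add, Real.cos_pi,
      Real.sin_pi, hpi3]
    norm_num
  · push_cast
    rw [show (5:ℝ) * Real.pi / 3 = Real.pi + 2*Real.pi/3 by ring, Real.cos_add, Real.cos_pi,
      Real.sin_pi, show (2:ℝ)*Real.pi/3 = Real.pi - Real.pi/3 by ring, Real.cos_pi_sub, hpi3]
    norm_num

/-- for `0 < r ≤ 1/2`, every weighted pairwise sum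
`α_j B^j + α_k B^k` (`j < k`) of the family of Instance 2.1 is positive
semidefinite, i.e. the family satisfies Condition (D). -/
theorem diskFam_conditionD (r : ℝ) (hr : 0 < r) (hr' : r ≤ 1 / 2) :
    ∀ j k : Fin 8, j < k →
      (diskWeight j • diskFam r j + diskWeight k • diskFam r k).PosSemidef := by
  intro j k hjk
  have hjk' : (j : ℕ) < (k : ℕ) := hjk
  have hk8 : (k : ℕ) ≤ 7 := by omega
  have hrsq : r^2 ≤ 1/4 := by nlinarith
  by_cases hk5 : (k : ℕ) ≤ 5
  · -- both rotation matrices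
    have hj5 : (j : ℕ) ≤ 5 := by omega
    set θj := (j : ℕ) * Real.pi / 3 with hθj
    set θk := (k : ℕ) * Real.pi / 3 with hθk
    rw [famEq5 r j hj5, famEq5 r k hk5, wlt j (by omega), wlt k (by omega), one_smul, one_smul]
    have hcos : Real.cos θj * Real.cos θk + Real.sin θj * Real.sin θk ≤ 1/2 := by
      have hdiff : θk - θj = (((k : ℕ) - (j : ℕ) : ℕ) : ℝ) * Real.pi / 3 := by
        rw [hθj, hθk]
        have : (((k : ℕ) - (j : ℕ) : ℕ) : ℝ) = ((k : ℕ) : ℝ) - ((j : ℕ) : ℝ) := by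
          push_cast [Nat.cast_sub (le_of_lt hjk')]; ring
        rw [this]; ring
      have := Real.cos_sub θk θj
      have hle := cos_d_le ((k : ℕ) - (j : ℕ)) (by omega) (by omega)
      rw [← hdiff] at hle
      nlinarith [hle, Real.cos_sub θk θj]
    refine psd_of_eq 2 (-(Real.cos θj + Real.cos θk)) (-(Real.sin θj + Real.sin θk)) (2 - 2*r^2)
      ?_ (by norm_num) ?_
    · ext i l
      fin_cases i <;> fin_cases l <;> simp [Bm, Matrix.add_apply] <;> ring
    · nlinarith [Real.sin_sq_add_cos_sq θj, Real.sin_sq_add_cos_sq θk]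
  · by_cases hk6 : (k : ℕ) = 6
    · -- k = 6, j ≤ 5
      have hj5 : (j : ℕ) ≤ 5 := by omega
      set θj := (j : ℕ) * Real.pi / 3 with hθj
      rw [famEq5 r j hj5, famEq6 r k hk6, wlt j (by omega), wlt k (by omega), one_smul, one_smul]
      refine psd_of_eq 2 (-Real.cos θj) (-Real.sin θj) (1 - 2*r^2) ?_ (by norm_num) ?_
      · ext i l
        fin_cases i <;> fin_cases l <;> simp [Bm, EdMat, Matrix.add_apply, Matrix.vecHead, Matrix.vecTail] <;> ring
      · nlinarith [Real.sin_sq_add_cos_sq θj]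
    · -- k = 7
      have hk7 : (k : ℕ) = 7 := by omega
      by_cases hj6 : (j : ℕ) = 6
      · rw [famEq6 r j hj6, famEq7 r k hk7, wlt j (by omega), w7 k hk7, one_smul]
        refine psd_of_eq (2/3) 0 0 (3/4 - r^2) ?_ (by norm_num) (by nlinarith)
        ext i l
        fin_cases i <;> fin_cases l <;>
          simp [EdMat, Matrix.add_apply, Matrix.smul_apply, Matrix.neg_apply, Matrix.vecHead, Matrix.vecTail] <;> ring
      · have hj5 : (j : ℕ) ≤ 5 := by omega
        set θj := (j : ℕ) * Real.pi / 3 with hθj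
        rw [famEq5 r j hj5, famEq7 r k hk7, wlt j (by omega), w7 k hk7, one_smul]
        refine psd_of_eq (2/3) (-Real.cos θj) (-Real.sin θj) (7/4 - r^2) ?_ (by norm_num) ?_
        · ext i l
          fin_cases i <;> fin_cases l <;>
            simp [Bm, Matrix.add_apply, Matrix.smul_apply, Matrix.neg_apply, Matrix.vecHead, Matrix.vecTail] <;> ring
        · nlinarith [Real.sin_sq_add_cos_sq θj]
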